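/- Let G be a finite group and g ∈ G a semirational element of order n. Let I = {m : 1 ≤ m ≤ n, gcd(m,n)=1}, I₁ = {m ∈ I : g is conjugate to g^m}, I₂ = {m ∈ I : g⁻¹ is conjugate to g^m}. Then 1 ∈ I₁, n−1 ∈ I₂ and I₁ ∪ I₂ = I. Moreover if h is a positive integer with e(g) > h+1, then for all m₁,…,m_h ∈ I₁ with m₁+⋯+m_h (mod n) lying in I, one has m₁+⋯+m_h (mod n) ∈ I₁. -/
import Mathlib


/-- The generalized order of `g`: the smallest positive `k` such that some product of
`k` conjugates of `g` equals the identity. -/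
noncomputable def genOrder {G : Type*} [Group G] (g : G) : ℕ :=
  sInf {k | 0 < k ∧ ∃ l : List G, l.length = k ∧ (l.map fun x => x⁻¹ * g * x).prod = 1}

private lemma prod_pow_aux {G : Type*} [Group G] (g : G) :
    ∀ (h : ℕ) (f : Fin h → ℕ), (List.ofFn fun i => g ^ f i).prod = g ^ (∑ i, f i) := by
  intro h
  induction h with
  | zero => simp
  | succ k ih =>
    intro f
    rw [List.ofFn_succ, List.prod_cons, Fin.sum_univ_succ, pow_add]
    congr 1
    exact ih (fun i => f i.succ)

theorem stmt4 {G : Type*} [Group G] [Finite G] (g : G) (n : ℕ) (hn : orderOf g = n)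
    (hsemi : ∀ m : ℕ, Nat.Coprime m n → IsConj g (g ^ m) ∨ IsConj g⁻¹ (g ^ m))
    (I I1 I2 : Set (ZMod n))
    (hI : I = {m : ZMod n | IsUnit m})
    (hI1 : I1 = {m : ZMod n | m ∈ I ∧ IsConj g (g ^ m.val)})
    (hI2 : I2 = {m : ZMod n | m ∈ I ∧ IsConj g⁻¹ (g ^ m.val)}) :
    (1 : ZMod n) ∈ I1 ∧ (-1 : ZMod n) ∈ I2 ∧ I1 ∪ I2 = I ∧
    ∀ h : ℕ, 0 < h → h + 1 < genOrder g →
      ∀ f : Fin h → ZMod n, (∀ i, f i ∈ I1) → (∑ i, f i) ∈ I → (∑ i, f i) ∈ I1 := by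
  have hnpos : 0 < n := hn ▸ orderOf_pos g
  haveI : NeZero n := ⟨hnpos.ne'⟩
  have hpowval : ∀ k : ℕ, g ^ ((k : ZMod n)).val = g ^ k := by
    intro k
    rw [ZMod.val_natCast, ← hn, pow_mod_orderOf]
  -- 1 ∈ I1
  have h1 : (1 : ZMod n) ∈ I1 := by
    rw [hI1]
    refine ⟨hI ▸ isUnit_one, ?_⟩
    have h := hpowval 1
    rw [Nat.cast_one, pow_one] at h
    rw [h]
  -- -1 ∈ I2
  have h2 : (-1 : ZMod n) ∈ I2 := by
    rw [hI2]
    refine ⟨hI ▸ isUnit_one.neg, ?_⟩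
    have hcast : ((n - 1 : ℕ) : ZMod n) = -1 := by
      rw [Nat.cast_sub hnpos, ZMod.natCast_self, Nat.cast_one, zero_sub]
    have h := hpowval (n - 1)
    rw [hcast] at h
    have hinv : g ^ (n - 1) = g⁻¹ := by
      apply eq_inv_of_mul_eq_one_left
      rw [← pow_succ, Nat.sub_add_cancel hnpos, ← hn, pow_orderOf_eq_one]
    rw [h, hinv]
  -- union
  have hmemI : ∀ m : ZMod n, m ∈ I → Nat.Coprime m.val n := by
    intro m hm
    rw [hI] at hm
    obtain ⟨u, rfl⟩ := hm
    exact ZMod.val_coe_unit_coprime u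
  have hunion : I1 ∪ I2 = I := by
    ext m
    constructor
    · rintro (hm | hm)
      · rw [hI1] at hm; exact hm.1
      · rw [hI2] at hm; exact hm.1
    · intro hm
      rcases hsemi m.val (hmemI m hm) with h | h
      · left; rw [hI1]; exact ⟨hm, h⟩
      · right; rw [hI2]; exact ⟨hm, h⟩
  refine ⟨h1, h2, hunion, ?_⟩
  intro h hpos hlt f hf hsum
  by_contra hnot
  have hs2 : (∑ i, f i) ∈ I2 := by
    have : (∑ i, f i) ∈ I1 ∪ I2 := hunion ▸ hsum
    rcases this with h' | h'
    · exact absurd h' hnot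
    · exact h'
  -- extract conjugating elements
  have hfc : ∀ i, ∃ c : G, c * g * c⁻¹ = g ^ (f i).val := by
    intro i
    have := hf i
    rw [hI1] at this
    exact isConj_iff.mp this.2
  choose c hc using hfc
  rw [hI2] at hs2
  obtain ⟨d, hd⟩ : ∃ d : G, d * g⁻¹ * d⁻¹ = g ^ (∑ i, f i).val := isConj_iff.mp hs2.2
  -- build the list of h+1 conjugators
  set s : ZMod n := ∑ i, f i with hs
  have hvalsum : g ^ (∑ i, (f i).val) = g ^ s.val := by
    rw [pow_eq_pow_iff_modEq, hn, ← ZMod.natCast_eq_natCast_iff]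
    push_cast
    simp [ZMod.natCast_val, ZMod.cast_id, hs]
  have hmem : (h + 1) ∈ {k | 0 < k ∧ ∃ l : List G,
      l.length = k ∧ (l.map fun x => x⁻¹ * g * x).prod = 1} := by
    refine ⟨Nat.succ_pos h, (List.ofFn fun i => (c i)⁻¹) ++ [d⁻¹], by simp, ?_⟩
    rw [List.map_append, List.prod_append, List.map_ofFn]
    have hfn : (List.ofFn ((fun x => x⁻¹ * g * x) ∘ fun i => (c i)⁻¹)).prod
        = (List.ofFn fun i => g ^ (f i).val).prod := by
      refine congrArg List.prod (congrArg List.ofFn (funext fun i => ?_))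
      simp only [Function.comp_apply, inv_inv]
      exact hc i
    rw [hfn, prod_pow_aux, hvalsum, ← hd]
    simp
  have hle : genOrder g ≤ h + 1 := Nat.sInf_le hmem
  omega
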